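/- Let g, Ŝ, y*(x), ỹ_δ(x) and L = L_xx + 2L_xy²/μ_y be as above, with Ŝ(·, y) convex in x (being F(·,y) - h(y) with F convex in x). Then for all x, z ∈ Q_x: 0 ≤ g(z) - [Ŝ(x, ỹ_δ(x)) + ⟨∇_x F(x, ỹ_δ(x)), z - x⟩] ≤ L ‖z - x‖₂² + 2δ. In other words, ∇_x F(x, ỹ_δ(x)) is a (2δ, 2L)-gradient of g at x. -/

import Mathlib

open Set Real Filter Topology
open scoped InnerProductSpace

section Helpers

variable {E : Type*} [NormedAddCommGroup E] [InnerProductSpace ℝ E] [CompleteSpace E]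

/-- derivative of f along a line, from a gradient -/
lemma line_hasDerivAt {f : E → ℝ} {G : E} {x d : E} {t : ℝ}
    (hf : HasGradientAt f G (x + t • d)) :
    HasDerivAt (fun s : ℝ => f (x + s • d)) ⟪G, d⟫_ℝ t := by
  have h1 : HasDerivAt (fun s : ℝ => x + s • d) d t := by
    simpa using ((hasDerivAt_id t).smul_const d).const_add x
  have := hf.hasFDerivAt.comp_hasDerivAt t h1
  simpa [InnerProductSpace.toDual_apply_apply, Function.comp_def] using this

/-- derivative comparison on [0,1] -/
lemma sub_le_sub_of_deriv_le {φ ψ φ' ψ' : ℝ → ℝ}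
    (hφ : ∀ t, HasDerivAt φ (φ' t) t) (hψ : ∀ t, HasDerivAt ψ (ψ' t) t)
    (hle : ∀ t ∈ Icc (0:ℝ) 1, φ' t ≤ ψ' t) : φ 1 - φ 0 ≤ ψ 1 - ψ 0 := by
  have hd : ∀ t, HasDerivAt (fun s => ψ s - φ s) (ψ' t - φ' t) t :=
    fun t => (hψ t).sub (hφ t)
  have hmono : MonotoneOn (fun s => ψ s - φ s) (Icc (0:ℝ) 1) := by
    apply monotoneOn_of_deriv_nonneg (convex_Icc 0 1)
    · exact fun t _ => ((hd t).continuousAt).continuousWithinAt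
    · exact fun t _ => ((hd t).differentiableAt).differentiableWithinAt
    · intro t ht
      rw [(hd t).deriv]
      have : t ∈ Icc (0:ℝ) 1 := interior_subset ht
      linarith [hle t this]
  have := hmono (by norm_num : (0:ℝ) ∈ Icc (0:ℝ) 1) (by norm_num : (1:ℝ) ∈ Icc (0:ℝ) 1)
    (by norm_num)
  simp only at this
  linarith

/-- gradient inequality for convex functions -/
lemma convex_grad_ineq {s : Set E} {f : E → ℝ} (hconv : ConvexOn ℝ s f) {G x : E}
    (hx : x ∈ s) (hG : HasGradientAt f G x) {z : E} (hz : z ∈ s) :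
    f x + ⟪G, z - x⟫_ℝ ≤ f z := by
  have hφ : HasDerivAt (fun s : ℝ => f (x + s • (z - x))) ⟪G, z - x⟫_ℝ 0 := by
    apply line_hasDerivAt; simpa using hG
  have hslope : Filter.Tendsto (slope (fun s : ℝ => f (x + s • (z - x))) 0) (𝓝[>] (0:ℝ))
      (𝓝 ⟪G, z - x⟫_ℝ) :=
    (hasDerivAt_iff_tendsto_slope.1 hφ).mono_left
      (nhdsWithin_mono _ (fun t ht => by simp [Set.mem_Ioi.1 ht, ne_of_gt (Set.mem_Ioi.1 ht)]))
  have hev : ∀ᶠ t in 𝓝[>] (0:ℝ),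
      slope (fun s : ℝ => f (x + s • (z - x))) 0 t ≤ f z - f x := by
    filter_upwards [Ioo_mem_nhdsGT_of_mem (by norm_num : (0:ℝ) ∈ Ico (0:ℝ) 1)] with t ht
    obtain ⟨ht0, ht1⟩ := ht
    have hmem : x + t • (z - x) = (1 - t) • x + t • z := by
      module
    have hconvineq := hconv.2 hx hz (by linarith : (0:ℝ) ≤ 1 - t) (le_of_lt ht0)
      (by ring)
    rw [slope_def_field]
    simp only [sub_zero, zero_smul, add_zero]
    rw [div_le_iff₀ ht0, hmem]
    simp only [smul_eq_mul] at hconvineq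
    linarith
  linarith [le_of_tendsto hslope hev]

/-- norm combination identity -/
lemma norm_combo_sq (b y : E) (t : ℝ) :
    ‖(1 - t) • b + t • y‖ ^ 2
      = (1 - t) * ‖b‖ ^ 2 + t * ‖y‖ ^ 2 - t * (1 - t) * ‖y - b‖ ^ 2 := by
  rw [← real_inner_self_eq_norm_sq, ← real_inner_self_eq_norm_sq,
    ← real_inner_self_eq_norm_sq, ← real_inner_self_eq_norm_sq]
  simp only [inner_add_left, inner_add_right, inner_sub_left, inner_sub_right,
    inner_smul_left, inner_smul_right, conj_trivial, real_inner_comm b y]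
  ring

/-- maximizer of a strongly concave function -/
lemma strong_concave_max {μ : ℝ} (hμ : 0 < μ) {s : Set E} {ψ : E → ℝ}
    (hconc : ConcaveOn ℝ s (fun y => ψ y + μ / 2 * ‖y‖ ^ 2)) {b : E} (hb : b ∈ s)
    (hmax : ∀ y ∈ s, ψ y ≤ ψ b) {y : E} (hy : y ∈ s) :
    ψ y + μ / 2 * ‖y - b‖ ^ 2 ≤ ψ b := by
  have key : ∀ t ∈ Ioo (0:ℝ) 1, ψ y ≤ ψ b - μ / 2 * (1 - t) * ‖y - b‖ ^ 2 := by
    intro t ht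
    obtain ⟨ht0, ht1⟩ := ht
    have hmem : (1 - t) • b + t • y ∈ s :=
      hconc.1 hb hy (by linarith) (le_of_lt ht0) (by ring)
    have hci := hconc.2 hb hy (by linarith : (0:ℝ) ≤ 1 - t) (le_of_lt ht0) (by ring)
    simp only [smul_eq_mul] at hci
    rw [norm_combo_sq] at hci
    have hpb := hmax _ hmem
    nlinarith
  have hlim : Filter.Tendsto (fun t : ℝ => ψ b - μ / 2 * (1 - t) * ‖y - b‖ ^ 2)
      (𝓝[>] (0:ℝ)) (𝓝 (ψ b - μ / 2 * ‖y - b‖ ^ 2)) := by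
    have : Continuous (fun t : ℝ => ψ b - μ / 2 * (1 - t) * ‖y - b‖ ^ 2) := by continuity
    have h0 := this.tendsto 0
    simp only [sub_zero, mul_one] at h0
    exact h0.mono_left nhdsWithin_le_nhds
  have hev : ∀ᶠ t in 𝓝[>] (0:ℝ), ψ y ≤ ψ b - μ / 2 * (1 - t) * ‖y - b‖ ^ 2 := by
    filter_upwards [Ioo_mem_nhdsGT_of_mem (by norm_num : (0:ℝ) ∈ Ico (0:ℝ) 1)] with t ht
    exact key t ht
  linarith [ge_of_tendsto hlim hev]

/-- descent lemma -/
lemma descent_lemma {f : E → ℝ} {G : E → E} {L : ℝ}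
    (hf : ∀ p, HasGradientAt f (G p) p) (hLip : ∀ a b, ‖G a - G b‖ ≤ L * ‖a - b‖)
    (x z : E) : f z ≤ f x + ⟪G x, z - x⟫_ℝ + L / 2 * ‖z - x‖ ^ 2 := by
  set d := z - x with hd
  have hφ : ∀ t : ℝ, HasDerivAt (fun s : ℝ => f (x + s • d)) ⟪G (x + t • d), d⟫_ℝ t :=
    fun t => line_hasDerivAt (hf _)
  have hψ : ∀ t : ℝ, HasDerivAt
      (fun s : ℝ => f x + s * ⟪G x, d⟫_ℝ + L / 2 * s ^ 2 * ‖d‖ ^ 2)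
      (⟪G x, d⟫_ℝ + L * t * ‖d‖ ^ 2) t := by
    intro t
    have ha : HasDerivAt (fun s : ℝ => f x + s * ⟪G x, d⟫_ℝ) ⟪G x, d⟫_ℝ t := by
      have := ((hasDerivAt_id' t).mul_const ⟪G x, d⟫_ℝ).const_add (f x)
      simpa using this
    have hb : HasDerivAt (fun s : ℝ => L / 2 * s ^ 2 * ‖d‖ ^ 2) (L * t * ‖d‖ ^ 2) t := by
      have h2 := ((hasDerivAt_pow 2 t).const_mul (L / 2)).mul_const (‖d‖ ^ 2)
      convert h2 using 1
      · rfl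
      · rfl
      · show L * t * ‖d‖ ^ 2 = L / 2 * ((2:ℕ) * t ^ 1) * ‖d‖ ^ 2
        push_cast
        ring
    exact ha.add hb
  have hle : ∀ t ∈ Icc (0:ℝ) 1,
      ⟪G (x + t • d), d⟫_ℝ ≤ ⟪G x, d⟫_ℝ + L * t * ‖d‖ ^ 2 := by
    intro t ht
    have h2 : ⟪G (x + t • d) - G x, d⟫_ℝ ≤ L * t * ‖d‖ ^ 2 := by
      calc ⟪G (x + t • d) - G x, d⟫_ℝ ≤ ‖G (x + t • d) - G x‖ * ‖d‖ :=
            real_inner_le_norm _ _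
        _ ≤ (L * ‖(x + t • d) - x‖) * ‖d‖ :=
            mul_le_mul_of_nonneg_right (hLip _ _) (norm_nonneg _)
        _ = L * t * ‖d‖ ^ 2 := by
            rw [add_sub_cancel_left, norm_smul, Real.norm_eq_abs, abs_of_nonneg ht.1]; ring
    have h3 : ⟪G (x + t • d), d⟫_ℝ = ⟪G x, d⟫_ℝ + ⟪G (x + t • d) - G x, d⟫_ℝ := by
      rw [inner_sub_left]; ring
    linarith
  have hcmp := sub_le_sub_of_deriv_le hφ hψ hle
  have hxz : x + d = z := by rw [hd]; abel
  simp only [one_smul, zero_smul, add_zero, hxz, one_pow, mul_one] at hcmp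
  norm_num at hcmp
  linarith

end Helpers

set_option maxHeartbeats 1000000 in
theorem stmt_8 {n m : ℕ} (μy Lxy Lxx δ : ℝ) (hμ : 0 < μy) (hLxy : 0 ≤ Lxy)
    (hLxx : 0 ≤ Lxx) (hδ : 0 ≤ δ)
    (Qx : Set (EuclideanSpace ℝ (Fin n))) (hQx : Convex ℝ Qx)
    (Qy : Set (EuclideanSpace ℝ (Fin m))) (hQy : Convex ℝ Qy)
    (F : EuclideanSpace ℝ (Fin n) → EuclideanSpace ℝ (Fin m) → ℝ)
    (h : EuclideanSpace ℝ (Fin m) → ℝ)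
    -- Ŝ(·,y) = F(·,y) - h(y) is convex in x
    (hconvx : ∀ y ∈ Qy, ConvexOn ℝ Qx (fun x => F x y - h y))
    (hconc : ∀ x, ConcaveOn ℝ Qy (fun y => F x y - h y + μy / 2 * ‖y‖ ^ 2))
    (ystar : EuclideanSpace ℝ (Fin n) → EuclideanSpace ℝ (Fin m))
    (hystar_mem : ∀ x, ystar x ∈ Qy)
    (hystar_max : ∀ x, ∀ y ∈ Qy, F x y - h y ≤ F x (ystar x) - h (ystar x))
    (Fx : EuclideanSpace ℝ (Fin n) → EuclideanSpace ℝ (Fin m) → EuclideanSpace ℝ (Fin n))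
    (hFx : ∀ x y, HasGradientAt (fun x' => F x' y) (Fx x y) x)
    (hFxLipY : ∀ x y y', ‖Fx x y - Fx x y'‖ ≤ Lxy * ‖y - y'‖)
    (hFxLipX : ∀ x x' y, ‖Fx x y - Fx x' y‖ ≤ Lxx * ‖x - x'‖)
    (g : EuclideanSpace ℝ (Fin n) → ℝ)
    (hg : ∀ x, g x = F x (ystar x) - h (ystar x))
    (ytil : EuclideanSpace ℝ (Fin n) → EuclideanSpace ℝ (Fin m))
    (hytil_mem : ∀ x, ytil x ∈ Qy)
    (hytil : ∀ x ∈ Qx, g x - (F x (ytil x) - h (ytil x)) ≤ δ) :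
    ∀ x ∈ Qx, ∀ z ∈ Qx,
      0 ≤ g z - ((F x (ytil x) - h (ytil x)) + ⟪Fx x (ytil x), z - x⟫_ℝ) ∧
      g z - ((F x (ytil x) - h (ytil x)) + ⟪Fx x (ytil x), z - x⟫_ℝ) ≤
        (Lxx + 2 * Lxy ^ 2 / μy) * ‖z - x‖ ^ 2 + 2 * δ := by
  intro x hx z hz
  set yt := ytil x with hyt
  -- gradient of x' ↦ F x' y - h y
  have hgradS : ∀ (x' : EuclideanSpace ℝ (Fin n)) (y : EuclideanSpace ℝ (Fin m)),
      HasGradientAt (fun x'' => F x'' y - h y) (Fx x' y) x' := by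
    intro x' y
    have := (hFx x' y).hasFDerivAt.sub_const (h y)
    exact hasGradientAt_iff_hasFDerivAt.2 this
  constructor
  · -- lower bound
    have h1 : (F x yt - h yt) + ⟪Fx x yt, z - x⟫_ℝ ≤ F z yt - h yt :=
      convex_grad_ineq (hconvx yt (hytil_mem x)) hx (hgradS x yt) hz
    have h2 : F z yt - h yt ≤ g z := by rw [hg z]; exact hystar_max z yt (hytil_mem x)
    linarith
  · -- upper bound
    set R := ‖z - x‖ with hR
    have hRnn : 0 ≤ R := norm_nonneg _
    -- strong concavity consequence at x
    have hscx := fun (y : EuclideanSpace ℝ (Fin m)) (hy : y ∈ Qy) =>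
      strong_concave_max hμ (hconc x) (hystar_mem x) (fun y' hy' => hystar_max x y' hy') hy
    have hscz := fun (y : EuclideanSpace ℝ (Fin m)) (hy : y ∈ Qy) =>
      strong_concave_max hμ (hconc z) (hystar_mem z) (fun y' hy' => hystar_max z y' hy') hy
    -- ‖yt - ystar x‖² ≤ 2δ/μ
    have hs1 := hscx yt (hytil_mem x)
    have hgx : g x = F x (ystar x) - h (ystar x) := hg x
    have hδx := hytil x hx
    have hs_sq : μy / 2 * ‖yt - ystar x‖ ^ 2 ≤ δ := by
      linarith
    -- ‖ystar z - ystar x‖ ≤ (Lxy/μ) R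
    have hr1 := hscx (ystar z) (hystar_mem z)
    have hr2 := hscz (ystar x) (hystar_mem x)
    set ry := ‖ystar z - ystar x‖ with hry
    have hrynn : 0 ≤ ry := norm_nonneg _
    -- Lemma D : (F x a - F x b) - (F z a - F z b) ≤ Lxy ‖a - b‖ ‖z - x‖
    have hD : (F x (ystar x) - F x (ystar z)) - (F z (ystar x) - F z (ystar z)) ≤
        Lxy * ry * R := by
      set a := ystar x; set b := ystar z
      set d := z - x with hd
      have hφ : ∀ t : ℝ, HasDerivAt (fun s : ℝ => F (x + s • d) a - F (x + s • d) b)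
          ⟪Fx (x + t • d) a - Fx (x + t • d) b, d⟫_ℝ t := by
        intro t
        have h1 := line_hasDerivAt (f := fun x' => F x' a) (hFx (x + t • d) a) (x := x) (d := d)
        have h2 := line_hasDerivAt (f := fun x' => F x' b) (hFx (x + t • d) b) (x := x) (d := d)
        have := h1.sub h2
        rwa [← inner_sub_left] at this
      have hψ : ∀ t : ℝ, HasDerivAt (fun s : ℝ => -(Lxy * ry * R) * s) (-(Lxy * ry * R)) t := by
        intro t
        simpa using (hasDerivAt_id t).const_mul (-(Lxy * ry * R))
      have hry' : ry = ‖a - b‖ := by rw [hry, ← norm_neg]; congr 1; abel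
      have hle : ∀ t ∈ Icc (0:ℝ) 1, -(Lxy * ry * R) ≤
          ⟪Fx (x + t • d) a - Fx (x + t • d) b, d⟫_ℝ := by
        intro t ht
        have hCS : -(‖Fx (x + t • d) a - Fx (x + t • d) b‖ * ‖d‖) ≤
            ⟪Fx (x + t • d) a - Fx (x + t • d) b, d⟫_ℝ := by
          have h4 := real_inner_le_norm (Fx (x + t • d) a - Fx (x + t • d) b) (-d)
          rw [inner_neg_right, norm_neg] at h4
          linarith
        have hbd : ‖Fx (x + t • d) a - Fx (x + t • d) b‖ * ‖d‖ ≤ Lxy * ‖a - b‖ * ‖d‖ :=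
          mul_le_mul_of_nonneg_right (hFxLipY _ _ _) (norm_nonneg _)
        rw [hry']
        have hdR : ‖d‖ = R := by rw [hd, hR]
        nlinarith [hCS, hbd]
      have hcmp := sub_le_sub_of_deriv_le hψ hφ hle
      have hxz : x + d = z := by rw [hd]; abel
      simp only [one_smul, zero_smul, add_zero, hxz, mul_one, mul_zero] at hcmp
      linarith
    have hry_bound : μy * ry ^ 2 ≤ Lxy * ry * R := by
      have e2 : ‖ystar x - ystar z‖ = ry := by rw [hry, ← norm_neg]; congr 1; abel
      rw [e2] at hr2
      linarith
    -- descent lemma for F(·, ystar z)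
    have hdesc := descent_lemma (f := fun x' => F x' (ystar z)) (G := fun x' => Fx x' (ystar z))
      (L := Lxx) (fun p => hFx p (ystar z)) (fun a b => hFxLipX a b (ystar z)) x z
    -- inner product comparison
    have hinner : ⟪Fx x (ystar z), z - x⟫_ℝ - ⟪Fx x yt, z - x⟫_ℝ ≤
        Lxy * (ry + ‖yt - ystar x‖) * R := by
      have h1 : ⟪Fx x (ystar z), z - x⟫_ℝ - ⟪Fx x yt, z - x⟫_ℝ =
          ⟪Fx x (ystar z) - Fx x yt, z - x⟫_ℝ := by rw [inner_sub_left]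
      rw [h1]
      calc ⟪Fx x (ystar z) - Fx x yt, z - x⟫_ℝ ≤ ‖Fx x (ystar z) - Fx x yt‖ * ‖z - x‖ :=
            real_inner_le_norm _ _
        _ ≤ (Lxy * ‖ystar z - yt‖) * R := mul_le_mul_of_nonneg_right (hFxLipY _ _ _) hRnn
        _ ≤ Lxy * (ry + ‖yt - ystar x‖) * R := by
            have : ‖ystar z - yt‖ ≤ ry + ‖yt - ystar x‖ := by
              have := norm_sub_le_norm_sub_add_norm_sub (ystar z) (ystar x) yt
              rw [← hry] at this
              calc ‖ystar z - yt‖ ≤ ry + ‖ystar x - yt‖ := this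
                _ = ry + ‖yt - ystar x‖ := by rw [norm_sub_rev]
            exact mul_le_mul_of_nonneg_right
              (mul_le_mul_of_nonneg_left this hLxy) hRnn
      done
    -- bound Lxy * ry ≤ Lxy²/μ R etc.
    set s := ‖yt - ystar x‖ with hsdef
    have hsnn : 0 ≤ s := norm_nonneg _
    have hry_le : Lxy * ry * R ≤ Lxy ^ 2 / μy * R ^ 2 := by
      rcases eq_or_lt_of_le hrynn with h0 | h0
      · rw [← h0]
        have hpos : (0:ℝ) ≤ Lxy ^ 2 / μy * R ^ 2 := by positivity
        linarith
      · have : ry ≤ Lxy / μy * R := by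
          rw [div_mul_eq_mul_div, le_div_iff₀ hμ]
          nlinarith
        calc Lxy * ry * R ≤ Lxy * (Lxy / μy * R) * R :=
              mul_le_mul_of_nonneg_right (mul_le_mul_of_nonneg_left this hLxy) hRnn
          _ = Lxy ^ 2 / μy * R ^ 2 := by field_simp
    have hs_le : Lxy * s * R ≤ δ + Lxy ^ 2 / (2 * μy) * R ^ 2 := by
      have h2μ : (0:ℝ) < 2 * μy := by linarith
      have h2 : Lxy * s * R * (2 * μy) ≤ 2 * μy * δ + Lxy ^ 2 * R ^ 2 := by
        nlinarith [sq_nonneg (Lxy * R - μy * s), mul_le_mul_of_nonneg_left hs_sq hμ.le]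
      rw [← mul_le_mul_iff_of_pos_right h2μ]
      have h3 : (δ + Lxy ^ 2 / (2 * μy) * R ^ 2) * (2 * μy) = 2 * μy * δ + Lxy ^ 2 * R ^ 2 := by
        field_simp
      rw [h3]
      exact h2
    -- chain
    have hc1 : g z = F z (ystar z) - h (ystar z) := hg z
    have hc2 : F x (ystar z) - h (ystar z) ≤ g x := by
      rw [hgx]; exact hystar_max x (ystar z) (hystar_mem z)
    -- combine everything
    have hry_final : Lxy * (ry + s) * R ≤ Lxy ^ 2 / μy * R ^ 2 + δ + Lxy ^ 2 / (2 * μy) * R ^ 2 := by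
      have : Lxy * (ry + s) * R = Lxy * ry * R + Lxy * s * R := by ring
      linarith [hry_le, hs_le, this.le, this.ge]
    have hinner' : ⟪Fx x (ystar z), z - x⟫_ℝ ≤ ⟪Fx x yt, z - x⟫_ℝ +
        Lxy ^ 2 / μy * R ^ 2 + δ + Lxy ^ 2 / (2 * μy) * R ^ 2 := by linarith
    have hfin : g z ≤ (F x yt - h yt) + ⟪Fx x yt, z - x⟫_ℝ +
        (Lxx / 2 + Lxy ^ 2 / μy + Lxy ^ 2 / (2 * μy)) * R ^ 2 + 2 * δ := by
      have : g z ≤ F x (ystar z) - h (ystar z) + ⟪Fx x (ystar z), z - x⟫_ℝ +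
          Lxx / 2 * R ^ 2 := by rw [hc1]; linarith [hdesc]
      linarith
    have hcoef : (Lxx / 2 + Lxy ^ 2 / μy + Lxy ^ 2 / (2 * μy)) * R ^ 2 ≤
        (Lxx + 2 * Lxy ^ 2 / μy) * R ^ 2 := by
      apply mul_le_mul_of_nonneg_right _ (sq_nonneg R)
      have h1 : Lxy ^ 2 / (2 * μy) ≤ Lxy ^ 2 / μy / 2 := by
        rw [div_div, mul_comm]
      have h2 : 0 ≤ Lxy ^ 2 / μy := by positivity
      have h3 : 2 * Lxy ^ 2 / μy = 2 * (Lxy ^ 2 / μy) := by ring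
      rw [h3]
      linarith [h1, h2]
    linarith
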